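/- Let N ≥ 1, J = ⌊(N+1)/2⌋, let ψ : ℂ → ℝ, let P = {P₁,…,P_N} be a complete set of monic polynomials, and let L+2M = N. Let C be the 2J×2J antisymmetric matrix with C[j,k] = ⟨P_j,P_k⟩_ℂ if j,k ≤ N and C[j,k] = 0 otherwise. Then for every t ∈ I_{2M}^N, assuming absolute integrability, ((−i)^M / M!) ∫_{ℂ^M} {∏_{m=1}^M φ(β_m)φ(β̄_m) sgn(Im β_m)} · det W^β_{i,t} dλ_{2M}(β) = Pf C_{t_∘}, where W^β_{i,t} is the 2M×2M minor with entries W^β_{i,t}[j,k] = P_{t(k)}(γ_j) for γ = (β̄₁,β₁,…,β̄_M,β_M). -/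

import Mathlib

open MeasureTheory Finset

noncomputable section

/-- Pfaffian of a `2J × 2J` matrix, via the sum over the symmetric group. -/
def pf {K : Type*} [Field K] {J : ℕ} (U : Matrix (Fin (2*J)) (Fin (2*J)) K) : K :=
  ((2:K)^J * (Nat.factorial J : K))⁻¹ *
    ∑ τ : Equiv.Perm (Fin (2*J)), ((Equiv.Perm.sign τ : ℤ) : K) *
      ∏ j : Fin J, U (τ ⟨2*(j:ℕ), by have := j.isLt; omega⟩)
                     (τ ⟨2*(j:ℕ)+1, by have := j.isLt; omega⟩)

/-- The complementary error function `erfc(x) = (2/√π) ∫_x^∞ e^{-t²} dt`. -/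
def erfc (x : ℝ) : ℝ := (2 / Real.sqrt Real.pi) * ∫ t in Set.Ioi x, Real.exp (-t^2)

/-- The weight `φ(γ) = exp(-γ²/2) (erfc(√2 |Im γ|))^{1/2} ψ(γ)`. -/
def phi (ψ : ℂ → ℝ) (γ : ℂ) : ℂ :=
  Complex.exp (-γ^2/2) * ((erfc (Real.sqrt 2 * |γ.im|) ^ (1/2 : ℝ) : ℝ) : ℂ) * (ψ γ : ℂ)

/-- The skew-symmetric inner product
`⟨P,Q⟩_ℂ = -2i ∫_ℂ φ(β)φ(β̄) P(β̄)Q(β) sgn(Im β) dλ₂(β)`. -/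
def innerC (ψ : ℂ → ℝ) (P Q : Polynomial ℂ) : ℂ :=
  (-2) * Complex.I * ∫ β : ℂ, phi ψ β * phi ψ ((starRingEnd ℂ) β) *
    P.eval ((starRingEnd ℂ) β) * Q.eval β * ((Real.sign β.im : ℝ) : ℂ)

/-- The `2J × 2J` antisymmetric matrix `C`, `J = ⌊(N+1)/2⌋` (`0`-based indices; `P n`
is the monic polynomial of degree `n`, the paper's `P_{n+1}`). -/
def Cmat (N : ℕ) (ψ : ℂ → ℝ) (P : ℕ → Polynomial ℂ) :
    Matrix (Fin (2*((N+1)/2))) (Fin (2*((N+1)/2))) ℂ :=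
  fun j k => if (j:ℕ) < N ∧ (k:ℕ) < N then innerC ψ (P (j:ℕ)) (P (k:ℕ)) else 0

/-- The vector `γ = (β̄₁, β₁, …, β̄_M, β_M)`. -/
def betaVec {M : ℕ} (β : Fin M → ℂ) : Fin (2*M) → ℂ :=
  fun j => if (j:ℕ) % 2 = 0
    then (starRingEnd ℂ) (β ⟨(j:ℕ)/2, by have := j.isLt; omega⟩)
    else β ⟨(j:ℕ)/2, by have := j.isLt; omega⟩


lemma prod_fin_two_mul {β : Type*} [CommMonoid β] {n : ℕ} (f : Fin (2*n) → β) :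
    ∏ j, f j = ∏ m : Fin n,
      (f ⟨2*(m:ℕ), by have := m.isLt; omega⟩ * f ⟨2*(m:ℕ)+1, by have := m.isLt; omega⟩) := by
  let e : Fin n × Fin 2 ≃ Fin (2*n) := finProdFinEquiv.trans (finCongr (mul_comm n 2))
  rw [← Equiv.prod_comp e f, Fintype.prod_prod_type]
  refine Finset.prod_congr rfl fun m _ => ?_
  rw [Fin.prod_univ_two]
  congr 1
  · congr 1
    ext
    simp [e, finProdFinEquiv]
  · congr 1
    ext
    simp [e, finProdFinEquiv]
    omega

lemma betaVec_even {M : ℕ} (β : Fin M → ℂ) (m : Fin M) :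
    betaVec β ⟨2*(m:ℕ), by have := m.isLt; omega⟩ = (starRingEnd ℂ) (β m) := by
  have h1 : (2*(m:ℕ)) % 2 = 0 := by omega
  have h2 : (2*(m:ℕ)) / 2 = (m:ℕ) := by omega
  simp only [betaVec, h1, h2, Fin.eta, if_true]

lemma betaVec_odd {M : ℕ} (β : Fin M → ℂ) (m : Fin M) :
    betaVec β ⟨2*(m:ℕ)+1, by have := m.isLt; omega⟩ = β m := by
  have h1 : (2*(m:ℕ)+1) % 2 = 1 := by omega
  have h2 : (2*(m:ℕ)+1) / 2 = (m:ℕ) := by omega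
  simp only [betaVec, h1, h2, Fin.eta]
  norm_num

/-- **Lemma 8 (Sinclair).**  For every `t ∈ I_{2M}^N` (encoded by its image, the
`2M`-element subset `s` of `{0,…,N−1}`, with `t = s.orderEmbOfFin` and `t_∘` the
corresponding subset of `{0,…,2J−1}`),
`((−i)^M/M!) ∫_{ℂ^M} {∏ φ(β_m)φ(β̄_m) sgn(Im β_m)} det W^β_{i,t} dλ_{2M}(β) = Pf C_{t_∘}`,
assuming all integrals involved converge absolutely. -/
theorem complex_integral_eq_pfaffian_minor (N L M : ℕ) (hN : 1 ≤ N) (h : L + 2*M = N)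
    (ψ : ℂ → ℝ) (P : ℕ → Polynomial ℂ)
    (hP : ∀ n < N, (P n).Monic ∧ (P n).natDegree = n)
    (s : Finset (Fin N)) (hs : s.card = 2*M)
    (hInt : Integrable (fun β : Fin M → ℂ =>
      (∏ m : Fin M, phi ψ (β m) * phi ψ ((starRingEnd ℂ) (β m)) *
        ((Real.sign ((β m).im) : ℝ) : ℂ)) *
        Matrix.det (Matrix.of fun j k : Fin (2*M) =>
          (P ((s.orderEmbOfFin hs k : Fin N) : ℕ)).eval (betaVec β j))))
    (hIntC : ∀ p < N, ∀ q < N, Integrable (fun β : ℂ =>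
      phi ψ β * phi ψ ((starRingEnd ℂ) β) * (P p).eval ((starRingEnd ℂ) β) *
        (P q).eval β * ((Real.sign β.im : ℝ) : ℂ))) :
    (-Complex.I)^M * ((Nat.factorial M : ℕ) : ℂ)⁻¹ *
      (∫ β : Fin M → ℂ,
        (∏ m : Fin M, phi ψ (β m) * phi ψ ((starRingEnd ℂ) (β m)) *
          ((Real.sign ((β m).im) : ℝ) : ℂ)) *
          Matrix.det (Matrix.of fun j k : Fin (2*M) =>
            (P ((s.orderEmbOfFin hs k : Fin N) : ℕ)).eval (betaVec β j)))
      = pf (fun j k : Fin (2*M) =>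
          Cmat N ψ P
            ((s.image (Fin.castLE (by omega : N ≤ 2*((N+1)/2)))).orderEmbOfFin
              (by rw [Finset.card_image_of_injective _ (Fin.castLE_injective _), hs]) j)
            ((s.image (Fin.castLE (by omega : N ≤ 2*((N+1)/2)))).orderEmbOfFin
              (by rw [Finset.card_image_of_injective _ (Fin.castLE_injective _), hs]) k)) := by

  have hle : N ≤ 2*((N+1)/2) := by omega
  set t : Fin (2*M) ↪o Fin N := s.orderEmbOfFin hs with ht
  -- identify the embedding into the bigger index set
  have ht' : (fun j : Fin (2*M) => Fin.castLE hle (t j)) =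
      ⇑((s.image (Fin.castLE hle)).orderEmbOfFin
        (by rw [Finset.card_image_of_injective _ (Fin.castLE_injective _), hs])) :=
    Finset.orderEmbOfFin_unique _
      (fun j => Finset.mem_image_of_mem _ (Finset.orderEmbOfFin_mem s hs j))
      ((Fin.strictMono_castLE hle).comp (s.orderEmbOfFin hs).strictMono)
  -- entries of the Pfaffian matrix
  have hC : ∀ j k : Fin (2*M),
      Cmat N ψ P
        ((s.image (Fin.castLE hle)).orderEmbOfFin
          (by rw [Finset.card_image_of_injective _ (Fin.castLE_injective _), hs]) j)
        ((s.image (Fin.castLE hle)).orderEmbOfFin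
          (by rw [Finset.card_image_of_injective _ (Fin.castLE_injective _), hs]) k)
      = innerC ψ (P (t j)) (P (t k)) := by
    intro j k
    rw [← congrFun ht' j, ← congrFun ht' k]
    show (if ((t j : ℕ)) < N ∧ ((t k : ℕ)) < N
      then innerC ψ (P ((t j : ℕ))) (P ((t k : ℕ))) else 0) = _
    rw [if_pos ⟨(t j).isLt, (t k).isLt⟩]
  -- the per-pair integrand
  set F : Equiv.Perm (Fin (2*M)) → Fin M → ℂ → ℂ := fun σ m z =>
    phi ψ z * phi ψ ((starRingEnd ℂ) z) *
      (P ((t (σ ⟨2*(m:ℕ), by have := m.isLt; omega⟩)) : ℕ)).eval ((starRingEnd ℂ) z) *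
      (P ((t (σ ⟨2*(m:ℕ)+1, by have := m.isLt; omega⟩)) : ℕ)).eval z *
      ((Real.sign z.im : ℝ) : ℂ) with hF
  -- pointwise rewriting of the integrand
  have hdet : ∀ β : Fin M → ℂ,
      (∏ m : Fin M, phi ψ (β m) * phi ψ ((starRingEnd ℂ) (β m)) *
        ((Real.sign ((β m).im) : ℝ) : ℂ)) *
        Matrix.det (Matrix.of fun j k : Fin (2*M) =>
          (P ((t k : Fin N) : ℕ)).eval (betaVec β j))
      = ∑ σ : Equiv.Perm (Fin (2*M)),
          ((Equiv.Perm.sign σ : ℤ) : ℂ) * ∏ m : Fin M, F σ m (β m) := by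
    intro β
    rw [← Matrix.det_transpose, Matrix.det_apply', Finset.mul_sum]
    refine Finset.sum_congr rfl fun σ _ => ?_
    simp only [Matrix.transpose_apply, Matrix.of_apply]
    rw [prod_fin_two_mul (fun i : Fin (2*M) =>
      (P ((t (σ i) : Fin N) : ℕ)).eval (betaVec β i))]
    rw [mul_left_comm, ← Finset.prod_mul_distrib]
    congr 1
    refine Finset.prod_congr rfl fun m _ => ?_
    rw [betaVec_even, betaVec_odd, hF]
    ring
  -- integrability of each term
  have hIntσ : ∀ σ : Equiv.Perm (Fin (2*M)),
      Integrable (fun β : Fin M → ℂ =>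
        ((Equiv.Perm.sign σ : ℤ) : ℂ) * ∏ m : Fin M, F σ m (β m)) := by
    intro σ
    refine (Integrable.fintype_prod (f := F σ) fun m => ?_).const_mul _
    exact hIntC _ (t _).isLt _ (t _).isLt
  -- compute the integral
  have step1 : (∫ β : Fin M → ℂ,
      (∏ m : Fin M, phi ψ (β m) * phi ψ ((starRingEnd ℂ) (β m)) *
        ((Real.sign ((β m).im) : ℝ) : ℂ)) *
        Matrix.det (Matrix.of fun j k : Fin (2*M) =>
          (P ((t k : Fin N) : ℕ)).eval (betaVec β j)))
      = ∑ σ : Equiv.Perm (Fin (2*M)),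
          ((Equiv.Perm.sign σ : ℤ) : ℂ) * ∏ m : Fin M, ∫ z : ℂ, F σ m z := by
    rw [show (fun β : Fin M → ℂ =>
      (∏ m : Fin M, phi ψ (β m) * phi ψ ((starRingEnd ℂ) (β m)) *
        ((Real.sign ((β m).im) : ℝ) : ℂ)) *
        Matrix.det (Matrix.of fun j k : Fin (2*M) =>
          (P ((t k : Fin N) : ℕ)).eval (betaVec β j)))
      = fun β => ∑ σ : Equiv.Perm (Fin (2*M)),
          ((Equiv.Perm.sign σ : ℤ) : ℂ) * ∏ m : Fin M, F σ m (β m) from funext hdet]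
    rw [integral_finset_sum _ (fun σ _ => hIntσ σ)]
    refine Finset.sum_congr rfl fun σ _ => ?_
    rw [integral_const_mul, MeasureTheory.integral_fintype_prod_volume_eq_prod (ι := Fin M) (F σ)]
  -- each pair integral is an entry of C
  have hpair : ∀ (σ : Equiv.Perm (Fin (2*M))) (m : Fin M),
      (∫ z : ℂ, F σ m z) = ((-2 : ℂ) * Complex.I)⁻¹ *
        innerC ψ (P ((t (σ ⟨2*(m:ℕ), by have := m.isLt; omega⟩)) : ℕ))
                 (P ((t (σ ⟨2*(m:ℕ)+1, by have := m.isLt; omega⟩)) : ℕ)) := by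
    intro σ m
    rw [innerC, inv_mul_cancel_left₀ (mul_ne_zero (by norm_num) Complex.I_ne_zero)]
  -- the constant identity
  have hbase : (-Complex.I) * ((-2 : ℂ) * Complex.I)⁻¹ = (2:ℂ)⁻¹ := by
    rw [mul_inv, Complex.inv_I]
    ring_nf
    rw [Complex.I_sq]
    norm_num
  have hconst : (-Complex.I)^M * (((-2 : ℂ) * Complex.I)⁻¹)^M = ((2:ℂ)^M)⁻¹ := by
    rw [← mul_pow, hbase, inv_pow]
  -- finish
  rw [step1]
  unfold pf
  simp only [hC]
  rw [Finset.mul_sum, Finset.mul_sum]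
  refine Finset.sum_congr rfl fun σ _ => ?_
  simp only [hpair σ]
  rw [Finset.prod_mul_distrib, Finset.prod_const, Finset.card_univ, Fintype.card_fin,
    show ((2:ℂ)^M * ((Nat.factorial M : ℕ) : ℂ))⁻¹
      = ((2:ℂ)^M)⁻¹ * (((Nat.factorial M : ℕ) : ℂ))⁻¹ from mul_inv _ _,
    ← hconst]
  ring


end
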